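/- As formal power series, 1 + ∑_{m ≥ 1} q^{m(m+1)/2} / ((q;q)_{m-1}² (1-q^m)) = 1 + ((q;q)_∞)^{-1} ∑_{m ≥ 0} q^{(2m+1)(m+1)} / (q²;q²)_m. -/

import Mathlib

open PowerSeries

/-- The q-Pochhammer symbol `(q;q)_m = ∏_{j=1}^m (1 - q^j)`. -/
noncomputable def qPoch (m : ℕ) : PowerSeries ℚ :=
  ∏ j ∈ Finset.range m, (1 - PowerSeries.X ^ (j + 1))

/-- The q-Pochhammer symbol `(q²;q²)_m = ∏_{j=1}^m (1 - q^{2j})`. -/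
noncomputable def qPoch2 (m : ℕ) : PowerSeries ℚ :=
  ∏ j ∈ Finset.range m, (1 - PowerSeries.X ^ (2 * (j + 1)))

/-- The infinite product `(q;q)_∞`, defined coefficientwise. -/
noncomputable def qPochInf : PowerSeries ℚ :=
  PowerSeries.mk fun n => PowerSeries.coeff n (qPoch (n + 1))

/-- The formal sum `∑_{m ≥ 0} F m` of a family of power series in which the `m`-th
term has order at least `m`, defined coefficientwise. -/
noncomputable def formalSum (F : ℕ → PowerSeries ℚ) : PowerSeries ℚ :=
  PowerSeries.mk fun n => ∑ m ∈ Finset.range (n + 1), PowerSeries.coeff n (F m)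

abbrev R := PowerSeries ℚ

/-- triangular-ish: dd n = n(n-1)/2 -/
def dd : ℕ → ℕ
  | 0 => 0
  | n+1 => dd n + n

lemma two_dd : ∀ n, 2 * dd (n+1) = (n+1)*n
  | 0 => rfl
  | n+1 => by have := two_dd n; simp [dd] at *; ring_nf; ring_nf at this; omega

lemma dd_add (a b : ℕ) : dd (a+b) = dd a + dd b + a*b := by
  induction b with
  | zero => simp [dd]
  | succ b ih => show dd ((a+b)+1) = _; simp [dd, ih]; ring

lemma dd_ge (m : ℕ) : m + 1 ≤ dd (m+2) := by
  induction m with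
  | zero => simp [dd]
  | succ m ih => show _ ≤ dd ((m+2)+1); simp only [dd]; omega

/-- congruence mod X^(K+1), coefficientwise -/
def CongM (K : ℕ) (f g : R) : Prop := ∀ i ≤ K, PowerSeries.coeff i f = PowerSeries.coeff i g

lemma CongM.refl {K} (f : R) : CongM K f f := fun _ _ => rfl
lemma CongM.symm {K} {f g : R} (h : CongM K f g) : CongM K g f := fun i hi => (h i hi).symm
lemma CongM.trans {K} {f g h : R} (h1 : CongM K f g) (h2 : CongM K g h) : CongM K f h :=
  fun i hi => (h1 i hi).trans (h2 i hi)
lemma CongM.add {K} {f g f' g' : R} (h1 : CongM K f f') (h2 : CongM K g g') :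
    CongM K (f + g) (f' + g') := fun i hi => by simp [map_add, h1 i hi, h2 i hi]
lemma CongM.sub {K} {f g f' g' : R} (h1 : CongM K f f') (h2 : CongM K g g') :
    CongM K (f - g) (f' - g') := fun i hi => by simp [map_sub, h1 i hi, h2 i hi]
lemma CongM.mul {K} {f g f' g' : R} (h1 : CongM K f f') (h2 : CongM K g g') :
    CongM K (f * g) (f' * g') := by
  intro i hi
  rw [coeff_mul, coeff_mul]
  refine Finset.sum_congr rfl fun p hp => ?_
  simp only [Finset.HasAntidiagonal.mem_antidiagonal, Finset.mem_antidiagonal] at hp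
  rw [h1 p.1 (by omega), h2 p.2 (by omega)]
lemma CongM.sum {K} {ι : Type*} {s : Finset ι} {f g : ι → R} (h : ∀ m ∈ s, CongM K (f m) (g m)) :
    CongM K (∑ m ∈ s, f m) (∑ m ∈ s, g m) := fun i hi => by
  rw [map_sum, map_sum]; exact Finset.sum_congr rfl fun m hm => h m hm i hi
lemma CongM.sum_zero {K} {ι : Type*} {s : Finset ι} {f : ι → R} (h : ∀ m ∈ s, CongM K (f m) 0) :
    CongM K (∑ m ∈ s, f m) 0 := by
  have := CongM.sum h
  rw [Finset.sum_const_zero] at this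
  exact this
lemma CongM.of_eq {K} {f g : R} (h : f = g) : CongM K f g := h ▸ CongM.refl f

lemma coeff_X_pow_mul_lt {e i : ℕ} (u : R) (h : i < e) :
    PowerSeries.coeff i ((X:R)^e * u) = 0 := by
  rw [coeff_mul]
  refine Finset.sum_eq_zero fun p hp => ?_
  simp only [Finset.HasAntidiagonal.mem_antidiagonal, Finset.mem_antidiagonal] at hp
  rw [coeff_X_pow, if_neg (by omega), zero_mul]

lemma CongM.Xpow_mul_zero {K e : ℕ} (u : R) (h : K < e) : CongM K ((X:R)^e * u) 0 :=
  fun i hi => by rw [coeff_X_pow_mul_lt u (by omega), map_zero]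

lemma cc_one_sub_X_pow (k : ℕ) (hk : 0 < k) :
    constantCoeff (1 - (X:R)^k) = 1 := by
  simp [map_sub, constantCoeff_X, zero_pow (by omega : k ≠ 0)]

lemma cc_qPoch (m : ℕ) : constantCoeff (qPoch m) = 1 := by
  rw [qPoch, map_prod]
  refine Finset.prod_eq_one fun j _ => cc_one_sub_X_pow _ (by omega)

lemma cc_qPoch2 (m : ℕ) : constantCoeff (qPoch2 m) = 1 := by
  rw [qPoch2, map_prod]
  refine Finset.prod_eq_one fun j _ => cc_one_sub_X_pow _ (by omega)

lemma invUnique {f g : R} (h : f * g = 1) : f⁻¹ = g := by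
  have hf : constantCoeff f ≠ 0 := by
    intro h0
    have := congrArg (constantCoeff) h
    rw [map_mul, map_one, h0, zero_mul] at this
    exact zero_ne_one this
  calc f⁻¹ = f⁻¹ * (f * g) := by rw [h, mul_one]
    _ = (f⁻¹ * f) * g := by ring
    _ = g := by rw [PowerSeries.inv_mul_cancel f hf, one_mul]

lemma mul_inv_split {f g : R} (hf : constantCoeff f = 1) (hg : constantCoeff g = 1) :
    (f * g)⁻¹ = f⁻¹ * g⁻¹ := by
  apply invUnique
  have h1 : f * f⁻¹ = 1 := PowerSeries.mul_inv_cancel f (by rw [hf]; exact one_ne_zero)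
  have h2 : g * g⁻¹ = 1 := PowerSeries.mul_inv_cancel g (by rw [hg]; exact one_ne_zero)
  calc f * g * (f⁻¹ * g⁻¹) = (f * f⁻¹) * (g * g⁻¹) := by ring
    _ = 1 := by rw [h1, h2, mul_one]

lemma qPoch_succ (m : ℕ) : qPoch (m+1) = qPoch m * (1 - (X:R)^(m+1)) := by
  rw [qPoch, qPoch, Finset.prod_range_succ]

lemma qPoch2_succ (m : ℕ) : qPoch2 (m+1) = qPoch2 m * (1 - (X:R)^(2*(m+1))) := by
  rw [qPoch2, qPoch2, Finset.prod_range_succ]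

lemma one_sub_X_pow_mul_inv (k : ℕ) (hk : 0 < k) : (1 - (X:R)^k) * (1 - (X:R)^k)⁻¹ = 1 :=
  PowerSeries.mul_inv_cancel _ (by rw [cc_one_sub_X_pow k hk]; exact one_ne_zero)

lemma qPoch_mul_inv (m : ℕ) : qPoch m * (qPoch m)⁻¹ = 1 :=
  PowerSeries.mul_inv_cancel _ (by rw [cc_qPoch]; exact one_ne_zero)


lemma qPoch_inv_succ (m : ℕ) : (qPoch (m+1))⁻¹ = (qPoch m)⁻¹ * (1 - (X:R)^(m+1))⁻¹ := by
  rw [qPoch_succ]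
  exact mul_inv_split (cc_qPoch m) (cc_one_sub_X_pow _ (by omega))

lemma qPoch2_inv_succ (m : ℕ) : (qPoch2 (m+1))⁻¹ = (qPoch2 m)⁻¹ * (1 - (X:R)^(2*(m+1)))⁻¹ := by
  rw [qPoch2_succ]
  exact mul_inv_split (cc_qPoch2 m) (cc_one_sub_X_pow _ (by omega))

/-- b-recurrence: Q_{k+1}⁻¹ (1 - X^{k+1}) = Q_k⁻¹ -/
lemma qPoch_inv_rec (k : ℕ) : (qPoch (k+1))⁻¹ * (1 - (X:R)^(k+1)) = (qPoch k)⁻¹ := by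
  rw [qPoch_inv_succ]
  calc (qPoch k)⁻¹ * (1 - (X:R)^(k+1))⁻¹ * (1 - (X:R)^(k+1))
      = (qPoch k)⁻¹ * ((1 - (X:R)^(k+1)) * (1 - (X:R)^(k+1))⁻¹) := by ring
    _ = (qPoch k)⁻¹ := by rw [one_sub_X_pow_mul_inv _ (by omega), mul_one]

/-- A_s = Σ_{p=0}^{s} (-1)^p Q_p⁻¹ Q_{s-p}⁻¹ -/
noncomputable def AA (s : ℕ) : R :=
  ∑ p ∈ Finset.range (s+1), (-1:R)^p * (qPoch p)⁻¹ * (qPoch (s-p))⁻¹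

/-- Ã_s = Σ_{p=0}^{s} (-1)^p Q_p⁻¹ X^{s-p} Q_{s-p}⁻¹ -/
noncomputable def AT (s : ℕ) : R :=
  ∑ p ∈ Finset.range (s+1), (-1:R)^p * (qPoch p)⁻¹ * ((X:R)^(s-p) * (qPoch (s-p))⁻¹)

lemma qPoch_zero : qPoch 0 = 1 := by simp [qPoch]
lemma qPoch_zero_inv : (qPoch 0)⁻¹ = 1 := by rw [qPoch_zero]; exact invUnique (one_mul 1)

lemma star1 (s : ℕ) : AA (s+1) - AT (s+1) = AA s := by
  rw [AA, AT, ← Finset.sum_sub_distrib]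
  have h : ∀ p ∈ Finset.range (s+2),
      (-1:R)^p * (qPoch p)⁻¹ * (qPoch (s+1-p))⁻¹
        - (-1:R)^p * (qPoch p)⁻¹ * ((X:R)^(s+1-p) * (qPoch (s+1-p))⁻¹)
      = (-1:R)^p * (qPoch p)⁻¹ * ((1 - (X:R)^(s+1-p)) * (qPoch (s+1-p))⁻¹) := by
    intro p _; ring
  rw [Finset.sum_congr rfl h, Finset.sum_range_succ]
  have hlast : (-1:R)^(s+1) * (qPoch (s+1))⁻¹ *
      ((1 - (X:R)^(s+1-(s+1))) * (qPoch (s+1-(s+1)))⁻¹) = 0 := by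
    simp
  rw [hlast, add_zero, AA]
  refine Finset.sum_congr rfl fun p hp => ?_
  rw [Finset.mem_range] at hp
  have h1 : s + 1 - p = (s - p) + 1 := by omega
  rw [h1]
  have := qPoch_inv_rec (s - p)
  calc (-1:R)^p * (qPoch p)⁻¹ * ((1 - (X:R)^((s-p)+1)) * (qPoch ((s-p)+1))⁻¹)
      = (-1:R)^p * (qPoch p)⁻¹ * ((qPoch ((s-p)+1))⁻¹ * (1 - (X:R)^((s-p)+1))) := by ring
    _ = (-1:R)^p * (qPoch p)⁻¹ * (qPoch (s-p))⁻¹ := by rw [this]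

lemma star2 (s : ℕ) : (X:R)^(s+1) * AA (s+1) - AT (s+1) = AT s := by
  rw [AA, AT, Finset.mul_sum, ← Finset.sum_sub_distrib]
  have h : ∀ p ∈ Finset.range (s+2),
      (X:R)^(s+1) * ((-1:R)^p * (qPoch p)⁻¹ * (qPoch (s+1-p))⁻¹)
        - (-1:R)^p * (qPoch p)⁻¹ * ((X:R)^(s+1-p) * (qPoch (s+1-p))⁻¹)
      = (((X:R)^p - 1) * ((-1:R)^p * (qPoch p)⁻¹)) * ((X:R)^(s+1-p) * (qPoch (s+1-p))⁻¹) := by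
    intro p hp
    rw [Finset.mem_range] at hp
    have hx : (X:R)^(s+1) = (X:R)^p * (X:R)^(s+1-p) := by
      rw [← pow_add]; congr 1; omega
    rw [hx]; ring
  rw [Finset.sum_congr rfl h, Finset.sum_range_succ']
  have h0 : (((X:R)^0 - 1) * ((-1:R)^0 * (qPoch 0)⁻¹)) * ((X:R)^(s+1-0) * (qPoch (s+1-0))⁻¹) = 0 := by
    simp
  rw [h0, add_zero, AT]
  refine Finset.sum_congr rfl fun p hp => ?_
  rw [Finset.mem_range] at hp
  have hkey : ((X:R)^(p+1) - 1) * ((-1:R)^(p+1) * (qPoch (p+1))⁻¹) = (-1:R)^p * (qPoch p)⁻¹ := by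
    have := qPoch_inv_rec p
    calc ((X:R)^(p+1) - 1) * ((-1:R)^(p+1) * (qPoch (p+1))⁻¹)
        = (-1:R)^p * ((-1) * (-1)) * ((qPoch (p+1))⁻¹ * (1 - (X:R)^(p+1))) := by ring
      _ = (-1:R)^p * (qPoch p)⁻¹ := by rw [this]; ring
  have h2 : s + 1 - (p+1) = s - p := by omega
  rw [hkey, h2]

lemma gaussRec (s : ℕ) : AA (s+2) * (1 - (X:R)^(s+2)) = AA s := by
  have h1 := star1 (s+1)
  have h2 := star2 (s+1)
  have h3 := star1 s
  -- X^{s+2} A_{s+2} = AT_{s+2} + AT_{s+1} = (A_{s+2} - A_{s+1}) + (A_{s+1} - A_s)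
  have : (X:R)^(s+2) * AA (s+2) = AA (s+2) - AA s := by
    have hAT2 : AT (s+2) = AA (s+2) - AA (s+1) := by rw [← h1]; ring
    have hAT1 : AT (s+1) = AA (s+1) - AA s := by rw [← h3]; ring
    calc (X:R)^(s+2) * AA (s+2) = AT (s+2) + AT (s+1) := by rw [← h2]; ring
      _ = AA (s+2) - AA s := by rw [hAT2, hAT1]; ring
  calc AA (s+2) * (1 - (X:R)^(s+2)) = AA (s+2) - (X:R)^(s+2) * AA (s+2) := by ring
    _ = AA s := by rw [this]; ring

lemma gaussStep (s : ℕ) : AA (s+2) = AA s * (1 - (X:R)^(s+2))⁻¹ := by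
  have h := gaussRec s
  have hu := one_sub_X_pow_mul_inv (s+2) (by omega)
  calc AA (s+2) = AA (s+2) * ((1 - (X:R)^(s+2)) * (1 - (X:R)^(s+2))⁻¹) := by rw [hu, mul_one]
    _ = (AA (s+2) * (1 - (X:R)^(s+2))) * (1 - (X:R)^(s+2))⁻¹ := by ring
    _ = AA s * (1 - (X:R)^(s+2))⁻¹ := by rw [h]

lemma AA_zero : AA 0 = 1 := by
  simp [AA, qPoch_zero_inv]

lemma AA_one : AA 1 = 0 := by
  rw [AA]
  rw [Finset.sum_range_succ, Finset.sum_range_succ, Finset.sum_range_zero]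
  simp [qPoch_zero_inv]

lemma AA_odd (m : ℕ) : AA (2*m+1) = 0 := by
  induction m with
  | zero => exact AA_one
  | succ m ih =>
    have : 2*(m+1)+1 = (2*m+1)+2 := by omega
    rw [this, gaussStep, ih, zero_mul]

lemma AA_even (m : ℕ) : AA (2*m) = (qPoch2 m)⁻¹ := by
  induction m with
  | zero => rw [AA_zero]; rw [show qPoch2 0 = 1 by simp [qPoch2]]; exact (invUnique (one_mul 1)).symm
  | succ m ih =>
    have h : 2*(m+1) = (2*m)+2 := by omega
    rw [h, gaussStep, ih, qPoch2_inv_succ]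
    ring_nf

/-- truncated Euler series S_m = Σ_{j≤K} (-1)^j X^{(m+2)j + C(j,2)} Q_j⁻¹ -/
noncomputable def Sf (K m : ℕ) : R :=
  ∑ j ∈ Finset.range (K+1), (-1:R)^j * ((X:R)^((m+2)*j + dd j) * (qPoch j)⁻¹)

/-- finite product (q^{m+2};q)_N -/
noncomputable def Ef (m N : ℕ) : R :=
  ∏ j ∈ Finset.range N, (1 - (X:R)^(m+2+j))

lemma expE4 (m j : ℕ) : (m+2)*(j+1) + dd (j+1) = (m+2) + ((m+3)*j + dd j) := by
  simp only [dd]; ring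

lemma eulerExact (K m : ℕ) :
    Sf K m = Sf K (m+1) - (X:R)^(m+2) * Sf K (m+1)
      + (X:R)^(m+2) * ((-1:R)^K * ((X:R)^((m+3)*K + dd K) * (qPoch K)⁻¹)) := by
  have hsub : Sf K m - Sf K (m+1)
      = -((X:R)^(m+2) * (Sf K (m+1)
          - (-1:R)^K * ((X:R)^((m+3)*K + dd K) * (qPoch K)⁻¹))) := by
    rw [Sf, Sf, ← Finset.sum_sub_distrib]
    have h : ∀ j ∈ Finset.range (K+1),
        (-1:R)^j * ((X:R)^((m+2)*j + dd j) * (qPoch j)⁻¹)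
          - (-1:R)^j * ((X:R)^((m+3)*j + dd j) * (qPoch j)⁻¹)
        = (-1:R)^j * (X:R)^((m+2)*j + dd j) * ((1 - (X:R)^j) * (qPoch j)⁻¹) := by
      intro j _
      have hx : (X:R)^((m+3)*j + dd j) = (X:R)^((m+2)*j + dd j) * (X:R)^j := by
        rw [← pow_add]; congr 1; ring
      rw [hx]; ring
    rw [Finset.sum_congr rfl h, Finset.sum_range_succ']
    have h0 : (-1:R)^0 * (X:R)^((m+2)*0 + dd 0) * ((1 - (X:R)^0) * (qPoch 0)⁻¹) = 0 := by
      simp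
    rw [h0, add_zero]
    have h2 : ∀ i ∈ Finset.range K,
        (-1:R)^(i+1) * (X:R)^((m+2)*(i+1) + dd (i+1)) * ((1 - (X:R)^(i+1)) * (qPoch (i+1))⁻¹)
        = -((X:R)^(m+2) * ((-1:R)^i * ((X:R)^((m+3)*i + dd i) * (qPoch i)⁻¹))) := by
      intro i _
      have hrec : (1 - (X:R)^(i+1)) * (qPoch (i+1))⁻¹ = (qPoch i)⁻¹ := by
        rw [mul_comm]; exact qPoch_inv_rec i
      rw [hrec, expE4 m i, pow_add, pow_add]
      ring
    rw [Finset.sum_congr rfl h2]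
    rw [Finset.sum_range_succ]
    simp only [show m+1+2 = m+3 from by omega]
    rw [add_sub_cancel_right, Finset.mul_sum, ← Finset.sum_neg_distrib]
  linear_combination hsub

lemma eulerStep (K m : ℕ) : CongM K (Sf K m) ((1 - (X:R)^(m+2)) * Sf K (m+1)) := by
  have he := eulerExact K m
  have herr : CongM K ((X:R)^(m+2) * ((-1:R)^K * ((X:R)^((m+3)*K + dd K) * (qPoch K)⁻¹))) 0 := by
    have hx : (X:R)^(m+2) * ((-1:R)^K * ((X:R)^((m+3)*K + dd K) * (qPoch K)⁻¹))
        = (X:R)^((m+2) + ((m+3)*K + dd K)) * ((-1:R)^K * (qPoch K)⁻¹) := by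
      rw [pow_add]; ring
    rw [hx]
    exact CongM.Xpow_mul_zero _ (by nlinarith [dd_ge K])
  have : CongM K (Sf K m)
      ((1 - (X:R)^(m+2)) * Sf K (m+1)
        + (X:R)^(m+2) * ((-1:R)^K * ((X:R)^((m+3)*K + dd K) * (qPoch K)⁻¹))) := by
    apply CongM.of_eq
    rw [he]; ring
  refine this.trans ?_
  have := (CongM.refl ((1 - (X:R)^(m+2)) * Sf K (m+1))).add herr
  refine this.trans (CongM.of_eq (by ring))

lemma qPoch_Ef (m : ℕ) : ∀ N, qPoch (m+1) * Ef m N = qPoch (m+1+N)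
  | 0 => by simp [Ef]
  | N+1 => by
    rw [Ef, Finset.prod_range_succ, ← mul_assoc]
    have : (∏ j ∈ Finset.range N, (1 - (X:R)^(m+2+j))) = Ef m N := rfl
    rw [this, qPoch_Ef m N]
    rw [show m+1+(N+1) = (m+1+N)+1 from by omega, qPoch_succ]
    rw [show (m+1+N)+1 = m+2+N from by omega]

lemma cong_one_sub_big (K e : ℕ) (h : K < e) : CongM K (1 - (X:R)^e) 1 := by
  have := (CongM.refl (1:R)).sub (CongM.Xpow_mul_zero (1:R) h)
  refine CongM.of_eq (by rw [mul_one]) |>.trans (this.trans (CongM.of_eq (by ring)))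

lemma Ef_cong_one (K m : ℕ) (h : K < m+2) : ∀ N, CongM K (Ef m N) 1
  | 0 => CongM.of_eq (by simp [Ef])
  | N+1 => by
    rw [Ef, Finset.prod_range_succ]
    have h1 : CongM K (Ef m N) 1 := Ef_cong_one K m h N
    have h2 : CongM K (1 - (X:R)^(m+2+N)) 1 := cong_one_sub_big K _ (by omega)
    exact (h1.mul h2).trans (CongM.of_eq (one_mul 1))

lemma Sf_cong_one (K m : ℕ) (h : K < m+2) : CongM K (Sf K m) 1 := by
  rw [Sf, Finset.sum_range_succ']
  have h0 : (-1:R)^0 * ((X:R)^((m+2)*0 + dd 0) * (qPoch 0)⁻¹) = 1 := by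
    simp [qPoch_zero_inv, dd]
  rw [h0]
  have hz : ∀ i ∈ Finset.range K,
      CongM K ((-1:R)^(i+1) * ((X:R)^((m+2)*(i+1) + dd (i+1)) * (qPoch (i+1))⁻¹)) 0 := by
    intro i _
    have hx : (-1:R)^(i+1) * ((X:R)^((m+2)*(i+1) + dd (i+1)) * (qPoch (i+1))⁻¹)
        = (X:R)^((m+2)*(i+1) + dd (i+1)) * ((-1:R)^(i+1) * (qPoch (i+1))⁻¹) := by ring
    rw [hx]
    exact CongM.Xpow_mul_zero _ (by nlinarith)
  have := (CongM.sum hz).add (CongM.refl (1:R))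
  refine this.trans (CongM.of_eq ?_)
  rw [Finset.sum_const_zero, zero_add]

lemma eulerMain (K : ℕ) : ∀ d m, K ≤ m + d → CongM K (Sf K m) (Ef m (K+1))
  | 0, m, h => (Sf_cong_one K m (by omega)).trans (Ef_cong_one K m (by omega) (K+1)).symm
  | d+1, m, h => by
    have ih := eulerMain K d (m+1) (by omega)
    refine (eulerStep K m).trans ?_
    have step2 : CongM K ((1 - (X:R)^(m+2)) * Sf K (m+1)) ((1 - (X:R)^(m+2)) * Ef (m+1) (K+1)) :=
      (CongM.refl _).mul ih
    refine step2.trans ?_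
    have hprod : Ef m (K+2) = (1 - (X:R)^(m+2)) * Ef (m+1) (K+1) := by
      rw [Ef, Finset.prod_range_succ']
      have : ∀ i ∈ Finset.range (K+1), (1 - (X:R)^(m+2+(i+1))) = (1 - (X:R)^(m+1+2+i)) := by
        intro i _
        rw [show m+2+(i+1) = m+1+2+i from by omega]
      rw [Finset.prod_congr rfl this, Ef]
      rw [show m+2+0 = m+2 from rfl]
      ring
    rw [← hprod]
    have : Ef m (K+2) = Ef m (K+1) * (1 - (X:R)^(m+2+(K+1))) := by
      rw [Ef, Ef, Finset.prod_range_succ]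
    rw [this]
    have := (CongM.refl (Ef m (K+1))).mul (cong_one_sub_big K (m+2+(K+1)) (by omega))
    exact this.trans (CongM.of_eq (mul_one _))

lemma coeff_qPoch_stab (i : ℕ) : ∀ N, i < N → PowerSeries.coeff i (qPoch N) = PowerSeries.coeff i (qPoch (i+1))
  | 0, h => by omega
  | N+1, h => by
    rcases Nat.lt_succ_iff_lt_or_eq.mp h with h' | h'
    · have step : PowerSeries.coeff i (qPoch (N+1)) = PowerSeries.coeff i (qPoch N) := by
        rw [qPoch_succ]
        have : qPoch N * (1 - (X:R)^(N+1)) = qPoch N - (X:R)^(N+1) * qPoch N := by ring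
        rw [this, map_sub, coeff_X_pow_mul_lt _ (by omega), sub_zero]
      rw [step, coeff_qPoch_stab i N h']
    · rw [h']

lemma qPochInf_cong (K N : ℕ) (h : K < N) : CongM K qPochInf (qPoch N) := by
  intro i hi
  rw [qPochInf, coeff_mk]
  rw [coeff_qPoch_stab i N (by omega)]

lemma expE1 (k : ℕ) : (k+1)*(k+2)/2 = dd (k+2) := by
  have h := two_dd (k+1)
  rw [mul_comm (k+1) (k+2), ← h, Nat.mul_div_cancel_left _ (by norm_num : 0 < 2)]

lemma expE2 (m : ℕ) : (2*m+1)*(m+1) = 1 + (dd (2*m+1) + 2*m) := by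
  have h := two_dd (2*m)
  apply Nat.eq_of_mul_eq_mul_left (show 0 < 2 by norm_num)
  calc 2*((2*m+1)*(m+1)) = (2*m+1)*(2*m) + 2 + 4*m := by ring
    _ = 2*dd (2*m+1) + 2 + 4*m := by rw [h]
    _ = 2*(1 + (dd (2*m+1) + 2*m)) := by ring

lemma expE3 (m j : ℕ) : dd (m+2) + ((m+2)*j + dd j) = 1 + (dd (m+j+1) + (m+j)) := by
  have h2 : dd (m+2) = dd m + 1 + m*2 := by
    rw [dd_add m 2, show dd 2 = 1 from rfl]
  have h3 : dd (m+j+1) = (dd m + dd j + m*j) + (m+j) := by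
    show dd ((m+j)+1) = _
    rw [show dd ((m+j)+1) = dd (m+j) + (m+j) from rfl, dd_add m j]
  rw [h2, h3]; ring

lemma formalSum_cong (K : ℕ) (F : ℕ → R) (hF : ∀ m i, i < m → PowerSeries.coeff i (F m) = 0) :
    CongM K (formalSum F) (∑ m ∈ Finset.range (K+1), F m) := by
  intro i hi
  rw [formalSum, coeff_mk, map_sum]
  refine Finset.sum_subset ?_ ?_
  · intro m hm; rw [Finset.mem_range] at *; omega
  · intro m _ hm
    rw [Finset.mem_range] at hm
    exact hF m i (by omega)

noncomputable def Lterm (k : ℕ) : R :=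
  X ^ ((k + 1) * (k + 2) / 2) * ((qPoch k)⁻¹) ^ 2 * (1 - X ^ (k + 1))⁻¹

noncomputable def Rterm (m : ℕ) : R := X ^ ((2 * m + 1) * (m + 1)) * (qPoch2 m)⁻¹

noncomputable def tterm (m j : ℕ) : R :=
  (-1:R)^j * (X:R)^(1 + (dd (m+j+1) + (m+j))) * ((qPoch m)⁻¹ * (qPoch j)⁻¹)

lemma Lterm_eq (m : ℕ) :
    Lterm m = (X:R)^(dd (m+2)) * ((qPoch m)⁻¹ * (qPoch (m+1))⁻¹) := by
  rw [Lterm, expE1, qPoch_inv_succ]; ring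

lemma stepm (K m : ℕ) :
    CongM K (qPochInf * Lterm m) (∑ j ∈ Finset.range (K+1), tterm m j) := by
  have h1 : CongM K (qPochInf * Lterm m) (qPoch (m+1+(K+1)) * Lterm m) :=
    (qPochInf_cong K _ (by omega)).mul (CongM.refl _)
  refine h1.trans ?_
  have h2 : qPoch (m+1+(K+1)) * Lterm m = (X:R)^(dd (m+2)) * (qPoch m)⁻¹ * Ef m (K+1) := by
    rw [← qPoch_Ef m (K+1), Lterm_eq]
    calc qPoch (m+1) * Ef m (K+1) * ((X:R)^(dd (m+2)) * ((qPoch m)⁻¹ * (qPoch (m+1))⁻¹))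
        = (qPoch (m+1) * (qPoch (m+1))⁻¹) * ((X:R)^(dd (m+2)) * (qPoch m)⁻¹ * Ef m (K+1)) := by
          ring
      _ = (X:R)^(dd (m+2)) * (qPoch m)⁻¹ * Ef m (K+1) := by rw [qPoch_mul_inv, one_mul]
  refine (CongM.of_eq h2).trans ?_
  have h3 : CongM K ((X:R)^(dd (m+2)) * (qPoch m)⁻¹ * Ef m (K+1))
      ((X:R)^(dd (m+2)) * (qPoch m)⁻¹ * Sf K m) :=
    (CongM.refl _).mul (eulerMain K K m (by omega)).symm
  refine h3.trans (CongM.of_eq ?_)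
  rw [Sf, Finset.mul_sum]
  refine Finset.sum_congr rfl fun j _ => ?_
  rw [tterm, ← expE3 m j, pow_add]
  ring

lemma tterm_zero (K m j : ℕ) (h : K < m + j) : CongM K (tterm m j) 0 := by
  have he : tterm m j
      = (X:R)^(1+(dd (m+j+1)+(m+j))) * ((-1:R)^j * ((qPoch m)⁻¹ * (qPoch j)⁻¹)) := by
    rw [tterm]; ring
  rw [he]
  exact CongM.Xpow_mul_zero _ (by omega)

lemma inner_eq (s : ℕ) :
    ∑ j ∈ Finset.range (s+1), tterm (s-j) j = (X:R)^(1+(dd (s+1)+s)) * AA s := by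
  rw [AA, Finset.mul_sum]
  refine Finset.sum_congr rfl fun j hj => ?_
  rw [Finset.mem_range] at hj
  rw [tterm, show s-j+j = s from by omega]
  ring

lemma diag_reindex (K : ℕ) :
    ∑ p ∈ (Finset.range (K+1) ×ˢ Finset.range (K+1)).filter (fun p => p.1+p.2 ≤ K),
        tterm p.1 p.2
      = ∑ s ∈ Finset.range (K+1), ∑ j ∈ Finset.range (s+1), tterm (s-j) j := by
  rw [Finset.sum_sigma' (Finset.range (K+1)) (fun s => Finset.range (s+1))
    (fun s j => tterm (s-j) j)]
  refine Finset.sum_nbij' (fun p => (⟨p.1+p.2, p.2⟩ : Σ _ : ℕ, ℕ))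
    (fun x => (x.1 - x.2, x.2)) ?_ ?_ ?_ ?_ ?_
  · intro p hp
    simp only [Finset.mem_filter, Finset.mem_product, Finset.mem_range] at hp
    simp only [Finset.mem_sigma, Finset.mem_range]
    omega
  · intro x hx
    simp only [Finset.mem_sigma, Finset.mem_range] at hx
    simp only [Finset.mem_filter, Finset.mem_product, Finset.mem_range]
    omega
  · intro p hp
    simp only [Finset.mem_filter, Finset.mem_product, Finset.mem_range] at hp
    show (p.1 + p.2 - p.2, p.2) = p
    have : p.1 + p.2 - p.2 = p.1 := by omega
    rw [this]
  · intro x hx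
    simp only [Finset.mem_sigma, Finset.mem_range] at hx
    refine Sigma.ext ?_ (by rfl)
    simp only
    omega
  · intro p hp
    simp only [Finset.mem_filter, Finset.mem_product, Finset.mem_range] at hp
    simp only
    rw [show p.1 + p.2 - p.2 = p.1 from by omega]

lemma AA_ite (s : ℕ) :
    (X:R)^(1+(dd (s+1)+s)) * AA s
      = if s % 2 = 0 then (X:R)^(1+(dd (s+1)+s)) * (qPoch2 (s/2))⁻¹ else 0 := by
  rcases Nat.even_or_odd s with he | ho
  · have h2 : s % 2 = 0 := Nat.even_iff.mp he
    rw [if_pos h2]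
    have hs : 2*(s/2) = s := by omega
    have : AA s = (qPoch2 (s/2))⁻¹ := by
      conv_lhs => rw [← hs]
      exact AA_even (s/2)
    rw [this]
  · have h2 : ¬ s % 2 = 0 := by rw [Nat.odd_iff] at ho; omega
    rw [if_neg h2]
    have hs : 2*(s/2)+1 = s := by rw [Nat.odd_iff] at ho; omega
    have : AA s = 0 := by
      conv_lhs => rw [← hs]
      exact AA_odd (s/2)
    rw [this, mul_zero]

lemma Rterm_zero (K m : ℕ) (h : K < 2*m) : CongM K (Rterm m) 0 := by
  rw [Rterm]
  refine CongM.Xpow_mul_zero _ ?_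
  have : 2*m+1 ≤ (2*m+1)*(m+1) := Nat.le_mul_of_pos_right _ (by omega)
  omega

lemma gauss_apply (K : ℕ) :
    CongM K (∑ s ∈ Finset.range (K+1), (X:R)^(1+(dd (s+1)+s)) * AA s)
      (∑ m ∈ Finset.range (K+1), Rterm m) := by
  have h1 : ∑ s ∈ Finset.range (K+1), (X:R)^(1+(dd (s+1)+s)) * AA s
      = ∑ s ∈ (Finset.range (K+1)).filter (fun s => s % 2 = 0),
          (X:R)^(1+(dd (s+1)+s)) * (qPoch2 (s/2))⁻¹ := by
    rw [Finset.sum_filter]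
    exact Finset.sum_congr rfl fun s _ => AA_ite s
  rw [h1]
  have h2 : ∑ s ∈ (Finset.range (K+1)).filter (fun s => s % 2 = 0),
        (X:R)^(1+(dd (s+1)+s)) * (qPoch2 (s/2))⁻¹
      = ∑ m ∈ (Finset.range (K+1)).filter (fun m => 2*m ≤ K), Rterm m := by
    refine Finset.sum_nbij' (fun s => s/2) (fun m => 2*m) ?_ ?_ ?_ ?_ ?_
    · intro s hs
      simp only [Finset.mem_filter, Finset.mem_range] at *
      omega
    · intro m hm
      simp only [Finset.mem_filter, Finset.mem_range] at *
      omega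
    · intro s hs
      simp only [Finset.mem_filter, Finset.mem_range] at hs
      show 2*(s/2) = s
      omega
    · intro m hm
      simp only [Finset.mem_filter, Finset.mem_range] at hm
      show (2*m)/2 = m
      omega
    · intro s hs
      simp only [Finset.mem_filter, Finset.mem_range] at hs
      have hs2 : 2*(s/2) = s := by omega
      rw [Rterm, expE2 (s/2), hs2]
  rw [h2]
  refine CongM.symm ?_
  rw [← Finset.sum_filter_add_sum_filter_not (Finset.range (K+1)) (fun m => 2*m ≤ K)]
  have h3 : CongM K (∑ m ∈ (Finset.range (K+1)).filter (fun m => ¬ 2*m ≤ K), Rterm m) 0 := by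
    refine CongM.sum_zero fun m hm => ?_
    simp only [Finset.mem_filter, Finset.mem_range] at hm
    exact Rterm_zero K m (by omega)
  have := (CongM.refl (∑ m ∈ (Finset.range (K+1)).filter (fun m => 2*m ≤ K), Rterm m)).add h3
  exact this.trans (CongM.of_eq (add_zero _))

lemma mainCong (K : ℕ) : CongM K (qPochInf * formalSum Lterm) (formalSum Rterm) := by
  -- left: truncate formal sum
  have c1 : CongM K (formalSum Lterm) (∑ m ∈ Finset.range (K+1), Lterm m) := by
    refine formalSum_cong K Lterm fun m i hi => ?_
    rw [Lterm_eq, coeff_X_pow_mul_lt _ (by have := dd_ge m; omega)]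
  have c2 : CongM K (qPochInf * formalSum Lterm)
      (∑ m ∈ Finset.range (K+1), ∑ j ∈ Finset.range (K+1), tterm m j) := by
    refine ((CongM.refl qPochInf).mul c1).trans ?_
    refine (CongM.of_eq (Finset.mul_sum _ _ _)).trans ?_
    exact CongM.sum fun m _ => stepm K m
  refine c2.trans ?_
  -- reindex double sum
  have c3 : CongM K (∑ m ∈ Finset.range (K+1), ∑ j ∈ Finset.range (K+1), tterm m j)
      (∑ s ∈ Finset.range (K+1), (X:R)^(1+(dd (s+1)+s)) * AA s) := by
    rw [← Finset.sum_product' (Finset.range (K+1)) (Finset.range (K+1)) (fun m j => tterm m j)]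
    rw [← Finset.sum_filter_add_sum_filter_not
      (Finset.range (K+1) ×ˢ Finset.range (K+1)) (fun p => p.1+p.2 ≤ K)]
    have hzero : CongM K (∑ p ∈ (Finset.range (K+1) ×ˢ Finset.range (K+1)).filter
        (fun p => ¬ p.1+p.2 ≤ K), tterm p.1 p.2) 0 := by
      refine CongM.sum_zero fun p hp => ?_
      simp only [Finset.mem_filter, Finset.mem_product, Finset.mem_range] at hp
      exact tterm_zero K p.1 p.2 (by omega)
    have := (CongM.of_eq (diag_reindex K)).add hzero
    refine this.trans ?_
    refine (CongM.of_eq (add_zero _)).trans (CongM.of_eq ?_)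
    exact Finset.sum_congr rfl fun s _ => inner_eq s
  refine c3.trans ?_
  refine (gauss_apply K).trans ?_
  refine CongM.symm ?_
  refine formalSum_cong K Rterm fun m i hi => ?_
  rw [Rterm]
  refine coeff_X_pow_mul_lt _ ?_
  have : m+1 ≤ (2*m+1)*(m+1) := Nat.le_mul_of_pos_left _ (by omega)
  omega


/-- `1 + ∑_{m ≥ 1} q^{m(m+1)/2}/((q;q)_{m-1}²(1-q^m))
      = 1 + ((q;q)_∞)⁻¹ ∑_{m ≥ 0} q^{(2m+1)(m+1)}/(q²;q²)_m`
(the left sum over `m ≥ 1` is reindexed by `m = k + 1`). -/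
theorem shiftedStack_genFn_eulerian :
    1 + formalSum
        (fun k => X ^ ((k + 1) * (k + 2) / 2) * ((qPoch k)⁻¹) ^ 2 * (1 - X ^ (k + 1))⁻¹) =
      1 + qPochInf⁻¹ * formalSum (fun m => X ^ ((2 * m + 1) * (m + 1)) * (qPoch2 m)⁻¹) := by
  have hL : (fun k => (X:R) ^ ((k + 1) * (k + 2) / 2) * ((qPoch k)⁻¹) ^ 2
      * (1 - (X:R) ^ (k + 1))⁻¹) = Lterm := rfl
  have hR : (fun m => (X:R) ^ ((2 * m + 1) * (m + 1)) * (qPoch2 m)⁻¹) = Rterm := rfl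
  rw [hL, hR]
  congr 1
  have key : qPochInf * formalSum Lterm = formalSum Rterm := by
    ext K
    exact mainCong K K le_rfl
  have hcc : constantCoeff qPochInf ≠ 0 := by
    have h0 : PowerSeries.coeff 0 qPochInf = 1 := by
      rw [qPochInf, coeff_mk]
      have := cc_qPoch 1
      rw [← PowerSeries.coeff_zero_eq_constantCoeff] at this
      exact this
    rw [← PowerSeries.coeff_zero_eq_constantCoeff_apply, h0]
    exact one_ne_zero
  calc formalSum Lterm = (qPochInf⁻¹ * qPochInf) * formalSum Lterm := by
        rw [PowerSeries.inv_mul_cancel _ hcc, one_mul]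
    _ = qPochInf⁻¹ * (qPochInf * formalSum Lterm) := by ring
    _ = qPochInf⁻¹ * formalSum Rterm := by rw [key]
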